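/- arXiv:2501.05827 — 3 statements merged into one kernel-verified Lean document; each statement's English description precedes it below -/
import Mathlib

section
/- For the initial segment I_a ⊆ Q_n, the m-vector is monotone: m_0(I_a) ≤ m_1(I_a) ≤ ... ≤ m_{n-1}(I_a). -/
/-- The hypercube graph on `{0,1}^n`: two strings adjacent iff they differ in one coordinate. -/
def hypercube (n : ℕ) : SimpleGraph (Fin n → Bool) where
  Adj x y := (Finset.univ.filter (fun i => x i ≠ y i)).card = 1
  symm := ⟨by intro x y h; simpa [ne_comm] using h⟩
  loopless := ⟨by intro x h; simp at h⟩

/-- The integer represented by a string, position 0 most significant. -/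
def bval {n : ℕ} (x : Fin n → Bool) : ℕ :=
  ∑ i : Fin n, if x i then 2 ^ (n - 1 - i.val) else 0

/-- The initial segment of length `a` in the binary order on `{0,1}^n`. -/
def initSeg (n a : ℕ) : Finset (Fin n → Bool) :=
  Finset.univ.filter (fun x => bval x < a)

/-- `m_j(S)`: number of elements of `S` with a `1` in coordinate `j`. -/
def mCount {n : ℕ} (S : Finset (Fin n → Bool)) (j : Fin n) : ℕ :=
  (S.filter (fun x => x j = true)).card

/-- The hyperface `F_{j,k}` of strings whose `j`-th coordinate equals `k`. -/
def face (n : ℕ) (j : Fin n) (k : Bool) : Finset (Fin n → Bool) :=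
  Finset.univ.filter (fun x => x j = k)

def swapC {n : ℕ} (i j : Fin n) (x : Fin n → Bool) : Fin n → Bool :=
  fun k => if k = i then x j else if k = j then x i else x k

lemma bval_swap {n : ℕ} (i j : Fin n) (hij : i ≠ j) (x : Fin n → Bool) :
    bval (swapC i j x) + (if x i then 2 ^ (n-1-i.val) else 0) + (if x j then 2 ^ (n-1-j.val) else 0)
    = bval x + (if x j then 2 ^ (n-1-i.val) else 0) + (if x i then 2 ^ (n-1-j.val) else 0) := by
  unfold bval
  have key : ∀ (y : Fin n → Bool), ∑ k : Fin n, (if y k then 2 ^ (n-1-k.val) else 0)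
      = (if y i then 2 ^ (n-1-i.val) else 0) + ((if y j then 2 ^ (n-1-j.val) else 0)
        + ∑ k ∈ (Finset.univ.erase i).erase j, (if y k then 2 ^ (n-1-k.val) else 0)) := by
    intro y
    rw [← Finset.add_sum_erase _ _ (Finset.mem_univ i),
        ← Finset.add_sum_erase _ _ (Finset.mem_erase.mpr ⟨Ne.symm hij, Finset.mem_univ j⟩)]
  rw [key, key]
  have h1 : swapC i j x i = x j := by simp [swapC]
  have h2 : swapC i j x j = x i := by simp [swapC, hij.symm]
  have h3 : ∀ k ∈ (Finset.univ.erase i).erase j, swapC i j x k = x k := by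
    intro k hk
    simp only [Finset.mem_erase] at hk
    simp [swapC, hk.1, hk.2.1]
  rw [Finset.sum_congr rfl (fun k hk => by rw [h3 k hk]), h1, h2]
  ring

theorem stmt_1 (n a : ℕ) (ha : a ≤ 2 ^ n) (i j : Fin n) (hij : i ≤ j) :
    mCount (initSeg n a) i ≤ mCount (initSeg n a) j := by
  rcases eq_or_lt_of_le hij with h | h
  · rw [h]
  have hne : i ≠ j := Fin.ne_of_lt h
  set f : (Fin n → Bool) → (Fin n → Bool) := fun x => if x j then x else swapC i j x with hf
  apply Finset.card_le_card_of_injOn f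
  · intro x hx
    simp only [initSeg, mCount, Finset.mem_coe, Finset.mem_filter, Finset.mem_univ, true_and] at hx ⊢
    by_cases hxj : x j
    · simp [hf, hxj, hx.1]
    · have hb := bval_swap i j hne x
      rw [if_pos hx.2, if_neg hxj, if_neg hxj, if_pos hx.2] at hb
      have hpow : 2 ^ (n-1-j.val) ≤ 2 ^ (n-1-i.val) :=
        Nat.pow_le_pow_right (by norm_num) (by omega)
      have : bval (swapC i j x) ≤ bval x := by omega
      simp only [hf, hxj, if_false]
      refine ⟨lt_of_le_of_lt this hx.1, ?_⟩
      simp [swapC, hne.symm, hx.2]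
  · intro x1 hx1 x2 hx2 hfe
    simp only [mCount, initSeg, Finset.mem_coe, Finset.mem_filter, Finset.mem_univ, true_and] at hx1 hx2
    by_cases h1 : x1 j <;> by_cases h2 : x2 j <;> simp only [hf, h1, h2, Bool.false_eq_true, if_true, if_false] at hfe
    · exact hfe
    · exfalso
      have hi := congrFun hfe i
      simp [swapC, hx1.2] at hi
      exact h2 hi
    · exfalso
      have hi := congrFun hfe i
      simp [swapC, hx2.2] at hi
      exact h1 hi
    · funext k
      have := congrFun hfe k
      by_cases hk1 : k = i
      · rw [hk1, hx1.2, hx2.2]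
      · by_cases hk2 : k = j
        · subst hk2; simp [h1, h2]
        · simpa [swapC, hk1, hk2] using this
end

section
/- For a < 2^n and initial segments in Q_{n+1}: m_j(I_{2a+1}) = m_{j+1}(I_a) + m_{j+1}(I_{a+1}) for j ≤ n−1, and m_n(I_{2a+1}) = a. -/
open Finset

lemma bval_snoc {n : ℕ} (y : Fin n → Bool) (b : Bool) :
    bval (Fin.snoc y b) = 2 * bval y + (if b then 1 else 0) := by
  unfold bval
  rw [Fin.sum_univ_castSucc]
  simp only [Fin.snoc_castSucc, Fin.snoc_last, Fin.val_last, Fin.coe_castSucc]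
  rw [Finset.mul_sum]
  congr 1
  · apply Finset.sum_congr rfl
    intro i _
    have hi : i.val < n := i.isLt
    have : n + 1 - 1 - i.val = (n - 1 - i.val) + 1 := by omega
    rw [this, pow_succ]
    split <;> ring
  · simp

lemma bval_cons {n : ℕ} (y : Fin n → Bool) (b : Bool) :
    bval (Fin.cons b y) = (if b then 2 ^ n else 0) + bval y := by
  unfold bval
  rw [Fin.sum_univ_succ]
  simp only [Fin.cons_zero, Fin.cons_succ, Fin.val_zero, Fin.val_succ]
  have hs : (∑ i : Fin n, if y i then 2 ^ (n + 1 - 1 - (i.val + 1)) else 0)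
      = ∑ i : Fin n, if y i then 2 ^ (n - 1 - i.val) else 0 := by
    apply Finset.sum_congr rfl
    intro i _
    have h : n + 1 - 1 - (i.val + 1) = n - 1 - i.val := by omega
    rw [h]
  rw [hs]
  norm_num

lemma bval_lt {n : ℕ} (y : Fin n → Bool) : bval y < 2 ^ n := by
  induction n with
  | zero => simp [bval]
  | succ n ih =>
    rw [← Fin.cons_self_tail y, bval_cons]
    have := ih (Fin.tail y)
    have h2 : 2 ^ (n + 1) = 2 ^ n + 2 ^ n := by ring
    split <;> omega

lemma bval_injective {n : ℕ} : Function.Injective (bval (n := n)) := by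
  induction n with
  | zero => intro x y _; funext i; exact absurd i.isLt (by omega)
  | succ n ih =>
    intro x y h
    rw [← Fin.cons_self_tail x, ← Fin.cons_self_tail y] at *
    rw [bval_cons, bval_cons] at h
    have hx := bval_lt (Fin.tail x)
    have hy := bval_lt (Fin.tail y)
    have hb : x 0 = y 0 := by
      cases hx0 : x 0 <;> cases hy0 : y 0 <;> simp [hx0, hy0] at h ⊢ <;> omega
    rw [hb] at h ⊢
    have : bval (Fin.tail x) = bval (Fin.tail y) := by split at h <;> omega
    rw [ih this]

lemma card_bval_lt {n : ℕ} (a : ℕ) (ha : a ≤ 2 ^ n) :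
    (Finset.univ.filter (fun y : Fin n → Bool => bval y < a)).card = a := by
  have h1 : (Finset.univ.filter (fun y : Fin n → Bool => bval y < a)).card
      = ((Finset.univ.filter (fun y : Fin n → Bool => bval y < a)).image bval).card :=
    (Finset.card_image_of_injective _ bval_injective).symm
  rw [h1, ← Finset.filter_image (p := fun v => v < a)]
  have h2 : (Finset.univ.image (bval (n := n))) = Finset.range (2 ^ n) := by
    apply Finset.eq_of_subset_of_card_le
    · intro x hx
      simp only [Finset.mem_image] at hx
      obtain ⟨y, _, rfl⟩ := hx
      exact Finset.mem_range.2 (bval_lt y)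
    · rw [Finset.card_range, Finset.card_image_of_injective _ bval_injective]
      simp [Finset.card_univ]
  rw [h2]
  have : (Finset.range (2 ^ n)).filter (fun x => x < a) = Finset.range a := by
    ext x; simp; omega
  rw [this, Finset.card_range]

lemma count_snoc' {n a : ℕ} (j : Fin n) (b : Bool) (c : ℕ)
    (hc : ∀ B : ℕ, 2 * B + (if b then 1 else 0) < 2 * a + 1 ↔ B < c) :
    (Finset.univ.filter (fun x : Fin (n+1) → Bool =>
        (bval x < 2*a+1 ∧ x j.castSucc = true) ∧ x (Fin.last n) = b)).card
      = (Finset.univ.filter (fun y : Fin n → Bool => bval y < c ∧ y j = true)).card := by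
  apply Finset.card_nbij' (i := Fin.init) (j := fun y => Fin.snoc y b)
  · intro x hx
    simp only [Finset.mem_coe, mem_filter, mem_univ, true_and] at hx ⊢
    obtain ⟨⟨h1, h2⟩, h3⟩ := hx
    have hx' : Fin.snoc (Fin.init x) b = x := by rw [← h3]; exact Fin.snoc_init_self x
    rw [← hx', bval_snoc] at h1
    exact ⟨(hc _).1 h1, h2⟩
  · intro y hy
    simp only [Finset.mem_coe, mem_filter, mem_univ, true_and] at hy ⊢
    obtain ⟨h1, h2⟩ := hy
    refine ⟨⟨?_, ?_⟩, ?_⟩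
    · rw [bval_snoc]; exact (hc _).2 h1
    · rw [Fin.snoc_castSucc]; exact h2
    · exact Fin.snoc_last _ _
  · intro x hx
    simp only [Finset.mem_coe, mem_filter] at hx
    rw [← hx.2.2]; exact Fin.snoc_init_self x
  · intro y _
    exact Fin.init_snoc _ _

lemma count_snoc_top {n a : ℕ} :
    (Finset.univ.filter (fun x : Fin (n+1) → Bool =>
        bval x < 2*a+1 ∧ x (Fin.last n) = true)).card
      = (Finset.univ.filter (fun y : Fin n → Bool => bval y < a)).card := by
  apply Finset.card_nbij' (i := Fin.init) (j := fun y => Fin.snoc y true)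
  · intro x hx
    simp only [Finset.mem_coe, mem_filter, mem_univ, true_and] at hx ⊢
    obtain ⟨h1, h3⟩ := hx
    have hx' : Fin.snoc (Fin.init x) true = x := by rw [← h3]; exact Fin.snoc_init_self x
    rw [← hx', bval_snoc] at h1
    simp at h1; omega
  · intro y hy
    simp only [Finset.mem_coe, mem_filter, mem_univ, true_and] at hy ⊢
    refine ⟨?_, Fin.snoc_last _ _⟩
    rw [bval_snoc]; simp; omega
  · intro x hx
    simp only [Finset.mem_coe, mem_filter] at hx
    rw [← hx.2.2]; exact Fin.snoc_init_self x
  · intro y _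
    exact Fin.init_snoc _ _

lemma count_cons' {n c : ℕ} (hc : c ≤ 2 ^ n) (j : Fin n) :
    (Finset.univ.filter (fun x : Fin (n+1) → Bool => bval x < c ∧ x j.succ = true)).card
      = (Finset.univ.filter (fun y : Fin n → Bool => bval y < c ∧ y j = true)).card := by
  apply Finset.card_nbij' (i := Fin.tail) (j := fun y => Fin.cons false y)
  · intro x hx
    simp only [Finset.mem_coe, mem_filter, mem_univ, true_and] at hx ⊢
    obtain ⟨h1, h2⟩ := hx
    have h0 : x 0 = false := by
      by_contra h
      have h0' : x 0 = true := by cases hx0 : x 0 <;> simp_all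
      have hx' : Fin.cons (x 0) (Fin.tail x) = x := Fin.cons_self_tail x
      rw [← hx', bval_cons, h0'] at h1
      simp at h1; omega
    have hx' : Fin.cons (x 0) (Fin.tail x) = x := Fin.cons_self_tail x
    rw [← hx', bval_cons, h0] at h1
    simp at h1
    exact ⟨h1, h2⟩
  · intro y hy
    simp only [Finset.mem_coe, mem_filter, mem_univ, true_and] at hy ⊢
    obtain ⟨h1, h2⟩ := hy
    refine ⟨?_, ?_⟩
    · rw [bval_cons]; simpa using h1
    · rw [Fin.cons_succ]; exact h2
  · intro x hx
    simp only [Finset.mem_coe, mem_filter, mem_univ, true_and] at hx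
    have h0 : x 0 = false := by
      by_contra h
      have h0' : x 0 = true := by cases hx0 : x 0 <;> simp_all
      have hx' : Fin.cons (x 0) (Fin.tail x) = x := Fin.cons_self_tail x
      rw [← hx', bval_cons, h0'] at hx
      simp at hx; omega
    rw [← h0]; exact Fin.cons_self_tail x
  · intro y _
    exact Fin.tail_cons _ _

theorem stmt_13 (n a : ℕ) (ha : a < 2 ^ n) :
    (∀ j : Fin (n + 1), (hj : j.val < n) →
      mCount (initSeg (n + 1) (2 * a + 1)) j =
        mCount (initSeg (n + 1) a) ⟨j.val + 1, by omega⟩ +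
          mCount (initSeg (n + 1) (a + 1)) ⟨j.val + 1, by omega⟩) ∧
    mCount (initSeg (n + 1) (2 * a + 1)) ⟨n, by omega⟩ = a := by
  constructor
  · intro j hj
    suffices h : ∀ J : Fin (n + 1), J.val = j.val + 1 →
        mCount (initSeg (n + 1) (2 * a + 1)) j =
          mCount (initSeg (n + 1) a) J + mCount (initSeg (n + 1) (a + 1)) J by
      exact h _ rfl
    intro J hJ
    have hJ' : J = Fin.succ (⟨j.val, hj⟩ : Fin n) := by
      apply Fin.ext; simpa using hJ
    rw [hJ']
    have hc1 : ∀ B : ℕ, 2*B+1 < 2*a+1 ↔ B < a := fun B => by omega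
    have hc0 : ∀ B : ℕ, 2*B+0 < 2*a+1 ↔ B < a+1 := fun B => by omega
    have ha2 : a + 1 ≤ 2 ^ n := ha
    unfold mCount initSeg
    rw [Finset.filter_filter, Finset.filter_filter, Finset.filter_filter]
    have e1 : (Finset.univ.filter (fun x : Fin (n+1) → Bool =>
          (bval x < 2*a+1 ∧ x j = true) ∧ x (Fin.last n) = true)).card
        = (Finset.univ.filter (fun y : Fin n → Bool =>
          bval y < a ∧ y ⟨j.val, hj⟩ = true)).card :=
      count_snoc' ⟨j.val, hj⟩ true a hc1
    have e0 : (Finset.univ.filter (fun x : Fin (n+1) → Bool =>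
          (bval x < 2*a+1 ∧ x j = true) ∧ x (Fin.last n) = false)).card
        = (Finset.univ.filter (fun y : Fin n → Bool =>
          bval y < a + 1 ∧ y ⟨j.val, hj⟩ = true)).card :=
      count_snoc' ⟨j.val, hj⟩ false (a+1) hc0
    have r1 : (Finset.univ.filter (fun x : Fin (n+1) → Bool =>
          bval x < a ∧ x (Fin.succ (⟨j.val, hj⟩ : Fin n)) = true)).card
        = (Finset.univ.filter (fun y : Fin n → Bool =>
          bval y < a ∧ y ⟨j.val, hj⟩ = true)).card :=
      count_cons' (le_of_lt ha) ⟨j.val, hj⟩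
    have r2 : (Finset.univ.filter (fun x : Fin (n+1) → Bool =>
          bval x < a + 1 ∧ x (Fin.succ (⟨j.val, hj⟩ : Fin n)) = true)).card
        = (Finset.univ.filter (fun y : Fin n → Bool =>
          bval y < a + 1 ∧ y ⟨j.val, hj⟩ = true)).card :=
      count_cons' ha2 ⟨j.val, hj⟩
    have hsplit := Finset.card_filter_add_card_filter_not
      (s := Finset.univ.filter (fun x : Fin (n+1) → Bool => bval x < 2*a+1 ∧ x j = true))
      (p := fun x => x (Fin.last n) = true)
    rw [Finset.filter_filter, Finset.filter_filter] at hsplit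
    have hneg : (Finset.univ.filter (fun x : Fin (n+1) → Bool =>
          (bval x < 2*a+1 ∧ x j = true) ∧ ¬ x (Fin.last n) = true))
        = Finset.univ.filter (fun x : Fin (n+1) → Bool =>
          (bval x < 2*a+1 ∧ x j = true) ∧ x (Fin.last n) = false) := by
      apply Finset.filter_congr
      intro x _
      simp
    rw [hneg] at hsplit
    rw [r1, r2, ← e1, ← e0]
    exact hsplit.symm
  · unfold mCount initSeg
    rw [Finset.filter_filter]
    have hlast : (⟨n, by omega⟩ : Fin (n+1)) = Fin.last n := rfl
    rw [hlast]
    rw [count_snoc_top, card_bval_lt a (le_of_lt ha)]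
end

section
/- The sequence t_n defined by t_4 = 24 and t_n = 2·t_{n−1} + Σ_{j=4}^{n−2} 2^{n−2−j}·t_j + 6·(4^{n−2} − (n−1)·2^{n−2}) for n ≥ 5 has closed form t_n = 4^n − 4·3^n + 6·2^n − 4 for all n ≥ 4. -/
lemma sumrel (t : ℕ → ℤ) (m : ℕ) :
    ∑ j ∈ Finset.Icc 4 (m+4), 2 ^ (m+4-j) * t j
      = 2 * ∑ j ∈ Finset.Icc 4 (m+3), 2 ^ (m+3-j) * t j + t (m+4) := by
  rw [show m+4 = (m+3)+1 from rfl, Finset.sum_Icc_succ_top (by omega), Finset.mul_sum]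
  congr 1
  · apply Finset.sum_congr rfl
    intro j hj
    simp only [Finset.mem_Icc] at hj
    rw [show m+3+1-j = (m+3-j)+1 by omega, pow_succ]
    ring
  · simp

theorem stmt_19 (t : ℕ → ℤ) (h4 : t 4 = 24)
    (hrec : ∀ n : ℕ, 5 ≤ n →
      t n = 2 * t (n - 1) + ∑ j ∈ Finset.Icc 4 (n - 2), 2 ^ (n - 2 - j) * t j +
        6 * (4 ^ (n - 2) - ((n : ℤ) - 1) * 2 ^ (n - 2))) :
    ∀ n : ℕ, 4 ≤ n → t n = 4 ^ n - 4 * 3 ^ n + 6 * 2 ^ n - 4 := by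
  have key : ∀ m : ℕ, t (m+4) = 4^(m+4) - 4*3^(m+4) + 6*2^(m+4) - 4 ∧
      t (m+5) = 4^(m+5) - 4*3^(m+5) + 6*2^(m+5) - 4 := by
    intro m
    induction m with
    | zero =>
      constructor
      · rw [h4]; norm_num
      · have h5 := hrec 5 (by norm_num)
        norm_num at h5
        rw [show 0+5=5 from rfl, h5, h4]; norm_num
    | succ m ih =>
      obtain ⟨ih1, ih2⟩ := ih
      refine ⟨ih2, ?_⟩
      have h6 := hrec (m+6) (by omega)
      have h5 := hrec (m+5) (by omega)
      simp only [show m+6-1 = m+5 by omega, show m+6-2 = m+4 by omega,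
        show m+5-1 = m+4 by omega, show m+5-2 = m+3 by omega] at h6 h5
      rw [sumrel] at h6
      rw [h6, ih1, ih2]
      have hS : ∑ j ∈ Finset.Icc 4 (m+3), 2 ^ (m+3-j) * t j
          = t (m+5) - 2 * t (m+4) - 6 * (4 ^ (m+3) - ((m+5 : ℕ) - 1 : ℤ) * 2 ^ (m+3)) := by
        rw [h5]; ring
      rw [hS, ih1, ih2]
      push_cast
      ring
  intro n hn
  obtain ⟨m, rfl⟩ : ∃ m, n = m + 4 := ⟨n - 4, by omega⟩
  exact (key m).1
end
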